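/- (Norm bound on the toll iterates.) If 2γ‖A‖² ≤ α, then for every k ∈ ℕ, ‖τ^k‖ ≤ ‖τ⋆‖ + ‖τ⁰ − τ⋆‖ + 2·√(γ·E^k), where E^k = ∑_{s=0}^{k-1} ε^s. -/

import Mathlib

open scoped RealInnerProductSpace

lemma aux_scalar (γ α ε a w u t P : ℝ) (hγ : 0 < γ)
    (_hw : 0 ≤ w) (_hu : 0 ≤ u) (_ht : 0 ≤ t) (_ha : 0 ≤ a)
    (htb : α / 2 * t ^ 2 ≤ ε) (hstep : 2 * γ * a ^ 2 ≤ α)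
    (hP : P ≤ γ * (ε + a * w * u - α / 2 * u ^ 2 + a * w * t)) :
    2 * P - w ^ 2 ≤ 4 * γ * ε := by
  nlinarith [sq_nonneg (w - 2 * γ * a * u), sq_nonneg (w - 2 * γ * a * t),
    mul_nonneg (mul_nonneg hγ.le (sub_nonneg.2 hstep)) (sq_nonneg u),
    mul_nonneg (mul_nonneg hγ.le (sub_nonneg.2 hstep)) (sq_nonneg t),
    mul_le_mul_of_nonneg_left htb hγ.le]

lemma aux_sqrt_add (x y : ℝ) (hx : 0 ≤ x) (hy : 0 ≤ y) :
    Real.sqrt (x + y) ≤ Real.sqrt x + Real.sqrt y := by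
  have h : x + y ≤ (Real.sqrt x + Real.sqrt y) ^ 2 := by
    nlinarith [Real.sq_sqrt hx, Real.sq_sqrt hy,
      mul_nonneg (Real.sqrt_nonneg x) (Real.sqrt_nonneg y)]
  calc Real.sqrt (x + y) ≤ Real.sqrt ((Real.sqrt x + Real.sqrt y) ^ 2) := Real.sqrt_le_sqrt h
    _ = Real.sqrt x + Real.sqrt y := Real.sqrt_sq (by positivity)

lemma aux_strong_min {E : Type*} [NormedAddCommGroup E] [NormedSpace ℝ E]
    {Y : Set E} {α : ℝ} {f : E → ℝ} (hα : 0 < α) (hf : StrongConvexOn Y α f)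
    {x y : E} (hx : x ∈ Y) (hy : y ∈ Y) (hmin : ∀ z ∈ Y, f x ≤ f z) :
    f x + α / 2 * ‖y - x‖ ^ 2 ≤ f y := by
  set c : ℝ := α / 2 * ‖y - x‖ ^ 2 with hc
  have hc0 : 0 ≤ c := by positivity
  have key : ∀ a : ℝ, 0 < a → a < 1 → (1 - a) * c ≤ f y - f x := by
    intro a ha ha1
    have hb : (0:ℝ) ≤ 1 - a := by linarith
    have hab : a + (1 - a) = 1 := by ring
    have hmem : a • y + (1 - a) • x ∈ Y := hf.1 hy hx ha.le hb hab
    have h2 := hf.2 hy hx ha.le hb hab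
    have h3 := hmin _ hmem
    simp only [smul_eq_mul] at h2
    have h4 : a * f y + (1 - a) * f x - a * (1 - a) * (α / 2 * ‖y - x‖ ^ 2) ≥ f x := le_trans h3 h2
    rw [← hc] at h4
    have h5 : a * ((1 - a) * c) ≤ a * (f y - f x) := by nlinarith
    exact le_of_mul_le_mul_left h5 ha
  by_contra hcon
  push_neg at hcon
  have hr : 0 ≤ f y - f x := by linarith [hmin y hy]
  have hcpos : 0 < c := by linarith
  set r := f y - f x with hrdef
  have ha : 0 < (c - r) / (2 * c) := div_pos (by linarith) (by positivity)
  have ha1 : (c - r) / (2 * c) < 1 := by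
    rw [div_lt_one (by positivity)]; linarith
  have := key _ ha ha1
  have h6 : (1 - (c - r) / (2 * c)) * c = (c + r) / 2 := by
    field_simp; ring
  rw [h6] at this
  linarith

lemma aux_proj {κ : Type*} [Fintype κ] (v σ w : EuclideanSpace ℝ κ)
    (hσ : ∀ i, 0 ≤ σ i) (hw : ∀ i, w i = max (v i) 0) :
    ⟪v - w, σ - w⟫ ≤ 0 := by
  have h : ⟪v - w, σ - w⟫ = ∑ i, (v i - w i) * (σ i - w i) := by
    simp [PiLp.inner_apply, RCLike.inner_apply, conj_trivial]
    exact Finset.sum_congr rfl fun i _ => mul_comm _ _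
  rw [h]
  apply Finset.sum_nonpos
  intro i _
  rcases le_or_gt 0 (v i) with h | h
  · have : w i = v i := by rw [hw i]; exact max_eq_left h
    rw [this]; simp
  · have hwi : w i = 0 := by rw [hw i]; exact max_eq_right h.le
    rw [hwi]
    have := hσ i
    nlinarith

set_option maxHeartbeats 1600000 in
theorem stmt_9
    {ι κ : Type*} [Fintype ι] [Fintype κ] [Nonempty ι] [Nonempty κ]
    (Y : Set (EuclideanSpace ℝ ι)) (hYne : Y.Nonempty) (hYcpt : IsCompact Y)
    (hYconv : Convex ℝ Y)
    (α : ℝ) (hα : 0 < α)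
    (F₀ : EuclideanSpace ℝ ι → ℝ) (hF₀cont : Continuous F₀)
    (hF₀sc : StrongConvexOn Y α F₀)
    (A : EuclideanSpace ℝ ι →L[ℝ] EuclideanSpace ℝ κ) (b : EuclideanSpace ℝ κ)
    (L : EuclideanSpace ℝ ι → EuclideanSpace ℝ κ → ℝ)
    (hL : ∀ y τ, L y τ = F₀ y + ⟪τ, A y - b⟫)
    (d : EuclideanSpace ℝ κ → ℝ)
    (hd : ∀ τ, d τ = sInf ((fun y => L y τ) '' Y))
    (γ : ℝ) (hγ : 0 < γ)
    (τs : ℕ → EuclideanSpace ℝ κ) (ys : ℕ → EuclideanSpace ℝ ι) (εs : ℕ → ℝ)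
    (hτ0 : ∀ i, 0 ≤ τs 0 i)
    (hεs : ∀ s, 0 ≤ εs s)
    (hysY : ∀ s, ys s ∈ Y)
    (hyseq : ∀ s, L (ys s) (τs s) ≤ d (τs s) + εs s)
    (hupdate : ∀ s i, τs (s + 1) i = max (τs s i + γ * (A (ys s) - b) i) 0)
    (τstar : EuclideanSpace ℝ κ) (hτstarpos : ∀ i, 0 ≤ τstar i)
    (hτstarmax : ∀ σ : EuclideanSpace ℝ κ, (∀ i, 0 ≤ σ i) → d σ ≤ d τstar)
    (hstep : 2 * γ * ‖A‖ ^ 2 ≤ α)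
    :
    ∀ k : ℕ,
      ‖τs k‖ ≤ ‖τstar‖ + ‖τs 0 - τstar‖ + 2 * Real.sqrt (γ * ∑ s ∈ Finset.range k, εs s) := by
  -- continuity of L(·, σ)
  have hLcont : ∀ σ : EuclideanSpace ℝ κ, Continuous fun y => L y σ := by
    intro σ
    simp only [hL]
    exact hF₀cont.add (Continuous.inner continuous_const (A.continuous.sub continuous_const))
  -- minimizers exist
  have hmin : ∀ σ : EuclideanSpace ℝ κ, ∃ x ∈ Y, IsMinOn (fun y => L y σ) Y x := fun σ =>
    hYcpt.exists_isMinOn hYne (hLcont σ).continuousOn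
  choose yopt hyY hymin using hmin
  have hdval : ∀ σ, d σ = L (yopt σ) σ := by
    intro σ
    rw [hd]
    have hls : IsLeast ((fun y => L y σ) '' Y) (L (yopt σ) σ) := by
      constructor
      · exact ⟨yopt σ, hyY σ, rfl⟩
      · rintro z ⟨y', hy', rfl⟩
        exact isMinOn_iff.mp (hymin σ) _ hy'
    exact hls.csInf_eq
  have hdle : ∀ σ, ∀ y ∈ Y, d σ ≤ L y σ := by
    intro σ y hy
    rw [hdval σ]
    exact isMinOn_iff.mp (hymin σ) _ hy
  -- strong convexity of L(·, σ)
  have hLsc : ∀ σ : EuclideanSpace ℝ κ, StrongConvexOn Y α fun y => L y σ := by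
    intro σ
    refine ⟨hYconv, ?_⟩
    intro x hx y hy a c ha hc hac
    have hlin : ⟪σ, A (a • x + c • y) - b⟫ = a * ⟪σ, A x - b⟫ + c * ⟪σ, A y - b⟫ := by
      have h1 : A (a • x + c • y) - b = a • (A x - b) + c • (A y - b) := by
        have h2 : A (a • x + c • y) = a • A x + c • A y := by
          rw [map_add, map_smul, map_smul]
        rw [h2, smul_sub, smul_sub]
        have h3 : a • b + c • b = b := by rw [← add_smul, hac, one_smul]
        rw [show a • A x - a • b + (c • A y - c • b)
              = a • A x + c • A y - (a • b + c • b) by abel, h3]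
      rw [h1, inner_add_right, real_inner_smul_right, real_inner_smul_right]
    have hF := hF₀sc.2 hx hy ha hc hac
    simp only [smul_eq_mul] at hF ⊢
    simp only [hL]
    rw [hlin]
    nlinarith [hF]
  -- nonnegativity of iterates
  have hpos : ∀ s i, 0 ≤ τs s i := by
    intro s
    induction s with
    | zero => exact hτ0
    | succ n _ => intro i; rw [hupdate]; exact le_max_right _ _
  have hdstar : ∀ s, d (τs s) ≤ d τstar := fun s => hτstarmax _ (hpos s)
  -- per-step decrease
  have hstep' : ∀ s, ‖τs (s+1) - τstar‖^2 ≤ ‖τs s - τstar‖^2 + 4 * γ * εs s := by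
    intro s
    have heq := hyseq s
    have hds := hdstar s
    have hds' := hdstar (s+1)
    set τ := τs s with hτdef
    set τ' := τs (s+1) with hτ'def
    set y := ys s with hydef
    set ε := εs s with hεdef
    set g : EuclideanSpace ℝ κ := A y - b with hgdef
    set yh := yopt τ with hyhdef
    set y' := yopt τ' with hy'def
    set t := ‖y - yh‖ with htdef
    set u := ‖y' - yh‖ with hudef
    set w := ‖τ' - τ‖ with hwdef
    have ht0 : 0 ≤ t := norm_nonneg _
    have hu0 : 0 ≤ u := norm_nonneg _
    have hw0 : 0 ≤ w := norm_nonneg _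
    have hA0 : (0:ℝ) ≤ ‖A‖ := norm_nonneg _
    have hminτ : ∀ z ∈ Y, L yh τ ≤ L z τ := fun z hz => isMinOn_iff.mp (hymin τ) _ hz
    -- (3) t bound
    have htb : α / 2 * t ^ 2 ≤ ε := by
      have h1 := aux_strong_min hα (hLsc τ) (hyY τ) (hysY s) hminτ
      have h3 := hdval τ
      simp only [← hyhdef, ← hydef, ← htdef] at h1 h3
      linarith
    -- (4) approximate supergradient (keeping d terms)
    have hsg : ⟪g, τ - τstar⟫ ≤ d τ - d τstar + ε := by
      have h1 : d τstar ≤ L y τstar := hdle τstar y (hysY s)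
      have h2 : L y τ - L y τstar = ⟪τ - τstar, g⟫ := by
        simp only [hL, ← hgdef]
        rw [inner_sub_left]; ring
      have h4 : ⟪g, τ - τstar⟫ = ⟪τ - τstar, g⟫ := real_inner_comm _ _
      rw [h4, ← h2]
      linarith
    -- (5) smoothness-type bound
    have hsm : ⟪τ' - τ, A yh - b⟫ ≤ d τ' - d τ + ‖A‖ * w * u - α / 2 * u ^ 2 := by
      have h1 : d τ' = L y' τ' := hdval τ'
      have h2 : L y' τ' = L y' τ + ⟪τ' - τ, A y' - b⟫ := by
        simp only [hL]
        rw [inner_sub_left]; ring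
      have h3 : L yh τ + α / 2 * u ^ 2 ≤ L y' τ := by
        have := aux_strong_min hα (hLsc τ) (hyY τ) (hyY τ') hminτ
        simp only [← hyhdef, ← hy'def, ← hudef] at this
        exact this
      have h4 : ⟪τ' - τ, A y' - b⟫ = ⟪τ' - τ, A yh - b⟫ + ⟪τ' - τ, A y' - A yh⟫ := by
        rw [← inner_add_right]
        congr 1
        abel
      have h5 : -(‖A‖ * w * u) ≤ ⟪τ' - τ, A y' - A yh⟫ := by
        have hcs := abs_real_inner_le_norm (τ' - τ) (A y' - A yh)
        have hAn : ‖A y' - A yh‖ ≤ ‖A‖ * u := by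
          rw [← map_sub]; exact A.le_opNorm _
        have habs : |⟪τ' - τ, A y' - A yh⟫| ≤ ‖A‖ * w * u := by
          calc |⟪τ' - τ, A y' - A yh⟫| ≤ ‖τ' - τ‖ * ‖A y' - A yh‖ := hcs
            _ ≤ w * (‖A‖ * u) := by
                rw [← hwdef]
                exact mul_le_mul_of_nonneg_left hAn hw0
            _ = ‖A‖ * w * u := by ring
        linarith [neg_abs_le ⟪τ' - τ, A y' - A yh⟫]
      have h6 : d τ = L yh τ := hdval τ
      have h7 : ⟪τ' - τ, A yh - b⟫ = ⟪τ' - τ, A y' - b⟫ - ⟪τ' - τ, A y' - A yh⟫ := by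
        rw [h4]; ring
      rw [h7]
      have h8 : ⟪τ' - τ, A y' - b⟫ = d τ' - L y' τ := by rw [h1]; linarith [h2]
      rw [h8]
      linarith [h3, h5, h6]
    -- bound ⟪τ'-τ, g⟫
    have hgy : ⟪τ' - τ, g⟫ ≤ d τ' - d τ + ‖A‖ * w * u - α / 2 * u ^ 2 + ‖A‖ * w * t := by
      have h4 : ⟪τ' - τ, g⟫ = ⟪τ' - τ, A yh - b⟫ + ⟪τ' - τ, A y - A yh⟫ := by
        rw [← inner_add_right]
        congr 1
        rw [hgdef]
        try abel
      have h5 : ⟪τ' - τ, A y - A yh⟫ ≤ ‖A‖ * w * t := by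
        have hcs := real_inner_le_norm (τ' - τ) (A y - A yh)
        have hAn : ‖A y - A yh‖ ≤ ‖A‖ * t := by
          rw [← map_sub]; exact A.le_opNorm _
        calc ⟪τ' - τ, A y - A yh⟫ ≤ ‖τ' - τ‖ * ‖A y - A yh‖ := hcs
          _ ≤ w * (‖A‖ * t) := by
              rw [← hwdef]
              exact mul_le_mul_of_nonneg_left hAn hw0
          _ = ‖A‖ * w * t := by ring
      rw [h4]
      linarith [hsm]
    -- projection inequality
    have hproj : ⟪(τ + γ • g) - τ', τstar - τ'⟫ ≤ 0 := by
      apply aux_proj _ _ _ hτstarpos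
      intro i
      rw [hτ'def, hupdate s i]
      congr 1
    -- expand projection inner product
    have hexp1 : ⟪(τ + γ • g) - τ', τstar - τ'⟫
        = ⟪τ - τ', τstar - τ'⟫ + γ * ⟪g, τstar - τ'⟫ := by
      have h : (τ + γ • g) - τ' = (τ - τ') + γ • g := by abel
      rw [h, inner_add_left, real_inner_smul_left]
    have hdec : ⟪g, τstar - τ'⟫ = -⟪g, τ - τstar⟫ - ⟪τ' - τ, g⟫ := by
      have h : τstar - τ' = -(τ - τstar) + -(τ' - τ) := by abel
      rw [h, inner_add_right, inner_neg_right, inner_neg_right, real_inner_comm g (τ' - τ)]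
      ring
    -- P bound
    have hPle : ⟪τ - τ', τstar - τ'⟫ ≤ γ * (ε + ‖A‖ * w * u - α / 2 * u ^ 2 + ‖A‖ * w * t) := by
      have h1 := hproj
      rw [hexp1, hdec] at h1
      have m1 := mul_le_mul_of_nonneg_left hsg hγ.le
      have m2 := mul_le_mul_of_nonneg_left hgy hγ.le
      have m3 := mul_le_mul_of_nonneg_left hds' hγ.le
      linarith [m1, m2, m3, h1]
    -- norm identity
    have hinid : ‖τ' - τstar‖ ^ 2 - ‖τ - τstar‖ ^ 2 = 2 * ⟪τ - τ', τstar - τ'⟫ - w ^ 2 := by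
      have e1 : ‖τ' - τstar‖ ^ 2 = ‖τ'‖ ^ 2 - 2 * ⟪τ', τstar⟫ + ‖τstar‖ ^ 2 := norm_sub_sq_real τ' τstar
      have e2 : ‖τ - τstar‖ ^ 2 = ‖τ‖ ^ 2 - 2 * ⟪τ, τstar⟫ + ‖τstar‖ ^ 2 := norm_sub_sq_real τ τstar
      have e3 : w ^ 2 = ‖τ'‖ ^ 2 - 2 * ⟪τ', τ⟫ + ‖τ‖ ^ 2 := by
        rw [hwdef]; exact norm_sub_sq_real τ' τ
      have e4 : ⟪τ - τ', τstar - τ'⟫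
          = ⟪τ, τstar⟫ - ⟪τ, τ'⟫ - (⟪τ', τstar⟫ - ‖τ'‖ ^ 2) := by
        rw [inner_sub_left, inner_sub_right, inner_sub_right, real_inner_self_eq_norm_sq]
      have e5 : ⟪τ, τ'⟫ = ⟪τ', τ⟫ := real_inner_comm _ _
      rw [e1, e2, e3, e4, e5]; ring
    -- combine
    have hfin := aux_scalar γ α ε ‖A‖ w u t ⟪τ - τ', τstar - τ'⟫ hγ hw0 hu0 ht0 hA0 htb hstep hPle
    linarith [hinid, hfin]
  -- telescoping
  have hsum : ∀ k, ‖τs k - τstar‖ ^ 2 ≤ ‖τs 0 - τstar‖ ^ 2 + 4 * γ * ∑ s ∈ Finset.range k, εs s := by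
    intro k
    induction k with
    | zero => simp
    | succ n ih =>
      rw [Finset.sum_range_succ, mul_add]
      have := hstep' n
      linarith
  -- conclusion
  intro k
  set E := ∑ s ∈ Finset.range k, εs s with hE
  have hE0 : 0 ≤ E := Finset.sum_nonneg fun s _ => hεs s
  have h1 : ‖τs k‖ ≤ ‖τstar‖ + ‖τs k - τstar‖ := by
    calc ‖τs k‖ = ‖τstar + (τs k - τstar)‖ := by rw [add_sub_cancel]
      _ ≤ ‖τstar‖ + ‖τs k - τstar‖ := norm_add_le _ _
  have h2 : ‖τs k - τstar‖ ≤ ‖τs 0 - τstar‖ + 2 * Real.sqrt (γ * E) := by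
    have h3 := hsum k
    have h4 : ‖τs k - τstar‖ = Real.sqrt (‖τs k - τstar‖ ^ 2) :=
      (Real.sqrt_sq (norm_nonneg _)).symm
    rw [h4]
    calc Real.sqrt (‖τs k - τstar‖ ^ 2)
        ≤ Real.sqrt (‖τs 0 - τstar‖ ^ 2 + 4 * γ * E) := Real.sqrt_le_sqrt h3
      _ ≤ Real.sqrt (‖τs 0 - τstar‖ ^ 2) + Real.sqrt (4 * γ * E) :=
          aux_sqrt_add _ _ (sq_nonneg _) (by positivity)
      _ = ‖τs 0 - τstar‖ + 2 * Real.sqrt (γ * E) := by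
          rw [Real.sqrt_sq (norm_nonneg _)]
          congr 1
          rw [show 4 * γ * E = 4 * (γ * E) by ring,
            Real.sqrt_mul (by norm_num : (0:ℝ) ≤ 4),
            show Real.sqrt 4 = 2 by
              rw [show (4:ℝ) = 2 ^ 2 by norm_num, Real.sqrt_sq (by norm_num)]]
  linarith
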